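/- arXiv:1207.1996 — 4 statements merged into one kernel-verified Lean document; each statement's English description precedes it below -/
import Mathlib

section
/- For all real numbers $x, y, w, z$ with $x \ge y$ and $w \ge z$, and all $p \in [1,\infty)$, one has $|y - z|^p + |x - w|^p \le |x - z|^p + |y - w|^p$. -/
open Set

private lemma convexOn_abs_rpow {p : ℝ} (hp : 1 ≤ p) :
    ConvexOn ℝ univ (fun t : ℝ => |t| ^ p) := by
  refine ⟨convex_univ, fun x _ y _ a b ha hb hab => ?_⟩
  have h1 : |a • x + b • y| ^ p ≤ (a * |x| + b * |y|) ^ p := by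
    apply Real.rpow_le_rpow (abs_nonneg _)
    · calc |a • x + b • y| ≤ |a • x| + |b • y| := abs_add_le _ _
        _ = a * |x| + b * |y| := by
          simp [abs_mul, abs_of_nonneg ha, abs_of_nonneg hb, smul_eq_mul]
    · linarith [le_abs_self x, le_abs_self y, mul_nonneg ha (abs_nonneg x),
        mul_nonneg hb (abs_nonneg y)]
  have h2 := (convexOn_rpow hp).2 (mem_Ici.2 (abs_nonneg x)) (mem_Ici.2 (abs_nonneg y)) ha hb hab
  simp only [smul_eq_mul] at h2 ⊢
  exact h1.trans h2

private lemma convex_shift {f : ℝ → ℝ} (hf : ConvexOn ℝ univ f) {a b d : ℝ}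
    (hd : 0 ≤ d) (hba : b - d ≤ a) : f b + f a ≤ f (a + d) + f (b - d) := by
  rcases eq_or_lt_of_le hd with rfl | hd
  · simp [add_comm]
  rcases eq_or_lt_of_le hba with heq | hlt
  · have : b = a + d := by linarith
    rw [this, ← heq]; ring_nf; exact le_refl _
  -- u = b - d < b = v,  u < a < a + d = t, v ≤ t
  have h1 : (f b - f (b - d)) / (b - (b - d)) ≤ (f (a + d) - f (b - d)) / (a + d - (b - d)) := by
    apply hf.secant_mono (mem_univ _) (mem_univ _) (mem_univ _) <;> linarith
  have h2 : (f (b - d) - f (a + d)) / (b - d - (a + d)) ≤ (f a - f (a + d)) / (a - (a + d)) := by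
    apply hf.secant_mono (mem_univ _) (mem_univ _) (mem_univ _) <;> linarith
  have e1 : (f b - f (b - d)) / (b - (b - d)) = (f b - f (b - d)) / d := by ring_nf
  have e2 : (f (b - d) - f (a + d)) / (b - d - (a + d))
      = (f (a + d) - f (b - d)) / (a + d - (b - d)) := by
    rw [div_eq_div_iff] <;> [ring; linarith; linarith]
  have e3 : (f a - f (a + d)) / (a - (a + d)) = (f (a + d) - f a) / d := by
    rw [div_eq_div_iff] <;> [ring; linarith; linarith]
  rw [e1] at h1
  rw [e2, e3] at h2
  have key : (f b - f (b - d)) / d ≤ (f (a + d) - f a) / d := h1.trans h2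
  have := (div_le_div_iff_of_pos_right hd).mp key
  linarith

/-- For all reals `x ≥ y`, `w ≥ z` and all `p ∈ [1,∞)`,
`|y-z|^p + |x-w|^p ≤ |x-z|^p + |y-w|^p`. -/
theorem stmt1 (x y w z p : ℝ) (hxy : y ≤ x) (hwz : z ≤ w) (hp : 1 ≤ p) :
    |y - z| ^ p + |x - w| ^ p ≤ |x - z| ^ p + |y - w| ^ p := by
  have h := convex_shift (convexOn_abs_rpow hp) (d := x - y) (a := y - z) (b := x - w)
    (by linarith) (by linarith)
  have e1 : y - z + (x - y) = x - z := by ring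
  have e2 : x - w - (x - y) = y - w := by ring
  rw [e1, e2] at h
  linarith
end

section
/- Let $G$ be a weighted graph with an almost equitable partition $V = \bigsqcup_{i \in I} V_i$ (with constants $c_{ij}$), where each cell has finite weighted size $|V_i|_d := \sum_{v \in V_i} d(v) < \infty$ and each cross-cell edge set has finite weight. Let $P$ be the cellwise averaging operator $Pf(v) := \frac{1}{|V_i|_d}\sum_{w \in V_i} f(w) d(w)$ for $v \in V_i$. Then for every $f$ in the form domain and every $p \in (1,\infty)$, the $p$-energy satisfies $\mathscr{E}_p(Pf) \le \mathscr{E}_p(f)$, where $\mathscr{E}_p(f) = \frac{1}{p}\sum_{e \in E} a(e) |f(e_+) - f(e_-)|^p$. -/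
open scoped ENNReal

namespace Stmt7Aux

variable {V E I : Type*}

variable (ep em : E → V) (cell : V → I)

/-- Edge between cells `i` and `j` (in either orientation). -/
def Q (i j : I) (e : E) : Prop :=
  (cell (ep e) = i ∧ cell (em e) = j) ∨ (cell (ep e) = j ∧ cell (em e) = i)

open Classical in
/-- Endpoint of `e` lying in cell `i`. -/
noncomputable def pick (i : I) (e : E) : V :=
  if cell (ep e) = i then ep e else em e

variable {ep em cell}

lemma Q_comm {i j : I} {e : E} : Q ep em cell i j e ↔ Q ep em cell j i e := or_comm

lemma pick_pair {i j : I} (hij : i ≠ j) {e : E} (he : Q ep em cell i j e) :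
    (pick ep em cell i e = ep e ∧ pick ep em cell j e = em e) ∨
      (pick ep em cell i e = em e ∧ pick ep em cell j e = ep e) := by
  rcases he with ⟨h1, h2⟩ | ⟨h1, h2⟩
  · left
    constructor
    · simp only [pick, if_pos h1]
    · simp only [pick]
      rw [if_neg]
      rw [h1]
      exact hij
  · right
    constructor
    · simp only [pick]
      rw [if_neg]
      rw [h1]
      exact fun h => hij h.symm
    · simp only [pick, if_pos h1]

lemma cell_pick {i j : I} (hij : i ≠ j) {e : E} (he : Q ep em cell i j e) :
    cell (pick ep em cell i e) = i := by
  rcases he with ⟨h1, h2⟩ | ⟨h1, h2⟩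
  · rw [show pick ep em cell i e = ep e by simp only [pick, if_pos h1]]; exact h1
  · rw [show pick ep em cell i e = em e by
      simp only [pick]; rw [if_neg]; rw [h1]; exact fun h => hij h.symm]
    exact h2

variable {a : E → ℝ} {d : V → ℝ}

lemma summable_T {i j : I} (hij : i ≠ j)
    (hsum : Summable (fun e : {e : E // cell (ep e) = i ∧ cell (em e) = j} => a e.1))
    (hsum' : Summable (fun e : {e : E // cell (ep e) = j ∧ cell (em e) = i} => a e.1)) :
    Summable (fun t : {e : E // Q ep em cell i j e} => a t.1) := by
  have h1 : Summable (Set.indicator {e : E | cell (ep e) = i ∧ cell (em e) = j} a) :=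
    summable_subtype_iff_indicator.mp hsum
  have h2 : Summable (Set.indicator {e : E | cell (ep e) = j ∧ cell (em e) = i} a) :=
    summable_subtype_iff_indicator.mp hsum'
  have hdisj : Disjoint {e : E | cell (ep e) = i ∧ cell (em e) = j}
      {e : E | cell (ep e) = j ∧ cell (em e) = i} := by
    rw [Set.disjoint_left]
    rintro e ⟨he1, he2⟩ ⟨he1', he2'⟩
    exact hij (he1 ▸ he1')
  have : Summable (Set.indicator
      ({e : E | cell (ep e) = i ∧ cell (em e) = j} ∪
        {e : E | cell (ep e) = j ∧ cell (em e) = i}) a) := by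
    rw [Set.indicator_union_of_disjoint hdisj]
    exact h1.add h2
  exact summable_subtype_iff_indicator.mpr this

/-- Summability of `a` over any subfamily of the edges between cells `i` and `j`. -/
lemma summable_of_subQ {i j : I} {P : E → Prop} (hPQ : ∀ e, P e → Q ep em cell i j e)
    (hT : Summable (fun t : {e : E // Q ep em cell i j e} => a t.1)) :
    Summable (fun e : {e : E // P e} => a e.1) := by
  have hinj : Function.Injective
      (fun e : {e : E // P e} => (⟨e.1, hPQ _ e.2⟩ : {e : E // Q ep em cell i j e})) :=
    by
      intro x y h
      have h2 : x.1 = y.1 := congrArg (fun z : {e : E // Q ep em cell i j e} => z.1) h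
      exact Subtype.ext h2
  have h := Summable.comp_injective (f := fun t : {e : E // Q ep em cell i j e} => a t.1)
    (i := fun e : {e : E // P e} => (⟨e.1, hPQ _ e.2⟩ : {e : E // Q ep em cell i j e}))
    hT hinj
  exact h

set_option maxHeartbeats 2000000 in
/-- The key Fubini-type identity for almost equitable partitions. -/
lemma core {i j : I} (hij : i ≠ j) (ha : ∀ e, 0 < a e) (hd : ∀ v, 0 < d v)
    (hT : Summable (fun t : {e : E // Q ep em cell i j e} => a t.1))
    (c : ℝ) (hc0 : 0 ≤ c)
    (hc : ∀ v : V, cell v = i →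
      (∑' e : {e : E // (ep e = v ∧ cell (em e) = j) ∨ (em e = v ∧ cell (ep e) = j)}, a e.1)
        = c * d v)
    (g : V → ℝ)
    (hg : Summable (fun v : {v : V // cell v = i} => |g v.1| * d v.1)) :
    HasSum (fun t : {e : E // Q ep em cell i j e} => a t.1 * g (pick ep em cell i t.1))
      (c * ∑' v : {v : V // cell v = i}, g v.1 * d v.1) := by
  classical
  let A' : {v : V // cell v = i} → Type _ := fun v =>
    {e : E // (ep e = v.1 ∧ cell (em e) = j) ∨ (em e = v.1 ∧ cell (ep e) = j)}
  have hQofA : ∀ (v : {v : V // cell v = i}) (e : E),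
      ((ep e = v.1 ∧ cell (em e) = j) ∨ (em e = v.1 ∧ cell (ep e) = j)) →
      Q ep em cell i j e := by
    rintro v e (⟨h1, h2⟩ | ⟨h1, h2⟩)
    · exact Or.inl ⟨by rw [h1]; exact v.2, h2⟩
    · exact Or.inr ⟨h2, by rw [h1]; exact v.2⟩
  let emb : (Σ v : {v : V // cell v = i}, A' v) → {e : E // Q ep em cell i j e} :=
    fun x => ⟨x.2.1, hQofA x.1 x.2.1 x.2.2⟩
  have emb_inj : Function.Injective emb := by
    rintro ⟨v, e⟩ ⟨w, e'⟩ h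
    have he : e.1 = e'.1 := congrArg Subtype.val h
    have hvw : v = w := by
      apply Subtype.ext
      rcases e.2 with ⟨h1, h2⟩ | ⟨h1, h2⟩ <;> rcases e'.2 with ⟨h1', h2'⟩ | ⟨h1', h2'⟩
      · rw [← h1, ← h1', he]
      · exact absurd (show i = j by rw [← v.2, ← h1, he]; exact h2') hij
      · exact absurd (show i = j by rw [← w.2, ← h1', ← he]; exact h2) hij
      · rw [← h1, ← h1', he]
    cases hvw
    exact congrArg (Sigma.mk v) (Subtype.ext he)
  have hrange : ∀ t : {e : E // Q ep em cell i j e}, t ∈ Set.range emb := by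
    rintro ⟨e, he⟩
    rcases he with ⟨h1, h2⟩ | ⟨h1, h2⟩
    · exact ⟨⟨⟨ep e, h1⟩, ⟨e, Or.inl ⟨rfl, h2⟩⟩⟩, Subtype.ext rfl⟩
    · exact ⟨⟨⟨em e, h2⟩, ⟨e, Or.inr ⟨rfl, h1⟩⟩⟩, Subtype.ext rfl⟩
  have hAv : ∀ v : {v : V // cell v = i}, Summable (fun e : A' v => a e.1) := fun v =>
    summable_of_subQ (hQofA v) hT
  have hAsum : ∀ v : {v : V // cell v = i},
      HasSum (fun e : A' v => a e.1) (c * d v.1) := fun v =>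
    (hc v.1 v.2) ▸ (hAv v).hasSum
  have pickA : ∀ (v : {v : V // cell v = i}) (e : A' v), pick ep em cell i e.1 = v.1 := by
    rintro v ⟨e, ⟨h1, h2⟩ | ⟨h1, h2⟩⟩
    · have hcl : cell (ep e) = i := by rw [h1]; exact v.2
      simp only [pick, if_pos hcl]; exact h1
    · have hcl : ¬ cell (ep e) = i := by rw [h2]; exact fun h => hij h.symm
      simp only [pick, if_neg hcl]; exact h1
  have FE : ∀ x : Σ v : {v : V // cell v = i}, A' v,
      a (emb x).1 * g (pick ep em cell i (emb x).1) = a x.2.1 * g x.1.1 := by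
    rintro ⟨v, e⟩
    show a e.1 * g (pick ep em cell i e.1) = a e.1 * g v.1
    rw [pickA v e]
  have habs : Summable (fun x : Σ v : {v : V // cell v = i}, A' v => a x.2.1 * |g x.1.1|) := by
    have key : ∀ v : {v : V // cell v = i},
        ∑' (y : A' v), a y.1 * |g v.1| = c * (|g v.1| * d v.1) := fun v => by
      rw [((hAsum v).mul_right |g v.1|).tsum_eq]; ring
    refine (summable_sigma_of_nonneg ?_).mpr
      ⟨fun v => ((hAv v).mul_right |g v.1|).congr fun e => rfl, ?_⟩
    · exact fun x => mul_nonneg (ha _).le (abs_nonneg _)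
    · exact (hg.mul_left c).congr fun v => ((key v).symm : _)
  have hsig : Summable (fun x : Σ v : {v : V // cell v = i}, A' v => a x.2.1 * g x.1.1) := by
    rw [← summable_abs_iff]
    exact habs.congr fun x => by rw [abs_mul, abs_of_pos (ha _)]
  have hdsum : Summable (fun v : {v : V // cell v = i} => g v.1 * d v.1) := by
    refine Summable.of_abs (hg.congr fun v => ?_)
    rw [abs_mul, abs_of_pos (hd v.1)]
  have houter : HasSum (fun v : {v : V // cell v = i} => (c * d v.1) * g v.1)
      (c * ∑' v : {v : V // cell v = i}, g v.1 * d v.1) := by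
    have h2 : (fun v : {v : V // cell v = i} => c * (g v.1 * d v.1))
        = fun v : {v : V // cell v = i} => (c * d v.1) * g v.1 := by
      funext v; ring
    have h3 := (hdsum.hasSum).mul_left c
    rw [h2] at h3
    exact h3
  have hsigma : HasSum (fun x : Σ v : {v : V // cell v = i}, A' v => a x.2.1 * g x.1.1)
      (c * ∑' v : {v : V // cell v = i}, g v.1 * d v.1) := by
    refine houter.sigma_of_hasSum (fun v => ?_) hsig
    exact (hAsum v).mul_right (g v.1)
  have hfeq : ((fun t : {e : E // Q ep em cell i j e} =>
        a t.1 * g (pick ep em cell i t.1)) ∘ emb)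
      = fun x : Σ v : {v : V // cell v = i}, A' v => a x.2.1 * g x.1.1 := funext FE
  refine (Function.Injective.hasSum_iff emb_inj (fun t ht => (ht (hrange t)).elim)).mp ?_
  rw [hfeq]
  exact hsigma

/-- The per-pair energy comparison. -/
lemma pair_le {a : E → ℝ} {d : V → ℝ} {i j : I} (hij : i ≠ j)
    (ha : ∀ e, 0 < a e) (hd : ∀ v, 0 < d v)
    (hT : Summable (fun t : {e : E // Q ep em cell i j e} => a t.1))
    {c c' : ℝ} (hc0 : 0 ≤ c) (hc0' : 0 ≤ c')
    (hc : ∀ v : V, cell v = i →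
      (∑' e : {e : E // (ep e = v ∧ cell (em e) = j) ∨ (em e = v ∧ cell (ep e) = j)}, a e.1)
        = c * d v)
    (hc' : ∀ v : V, cell v = j →
      (∑' e : {e : E // (ep e = v ∧ cell (em e) = i) ∨ (em e = v ∧ cell (ep e) = i)}, a e.1)
        = c' * d v)
    {p : ℝ} (hp : 1 < p) {f : V → ℝ}
    (hfabs_i : Summable (fun v : {v : V // cell v = i} => |f v.1| * d v.1))
    (hfabs_j : Summable (fun v : {v : V // cell v = j} => |f v.1| * d v.1))
    (hdi : Summable (fun v : {v : V // cell v = i} => d v.1))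
    (hdj : Summable (fun v : {v : V // cell v = j} => d v.1))
    (hfT : Summable (fun t : {e : E // Q ep em cell i j e} =>
      a t.1 * |f (ep t.1) - f (em t.1)| ^ p))
    {mi mj : ℝ}
    (hmi : mi = (∑' v : {v : V // cell v = i}, f v.1 * d v.1)
      / (∑' v : {v : V // cell v = i}, d v.1))
    (hmj : mj = (∑' v : {v : V // cell v = j}, f v.1 * d v.1)
      / (∑' v : {v : V // cell v = j}, d v.1)) :
    ∑' t : {e : E // Q ep em cell i j e}, ENNReal.ofReal (a t.1 * |mi - mj| ^ p)
      ≤ ∑' t : {e : E // Q ep em cell i j e},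
          ENNReal.ofReal (a t.1 * |f (ep t.1) - f (em t.1)| ^ p) := by
  classical
  by_cases hne : Nonempty {e : E // Q ep em cell i j e}
  swap
  · haveI := not_nonempty_iff.mp hne
    rw [tsum_empty, tsum_empty]
  obtain ⟨t0⟩ := hne
  have hp0 : p ≠ 0 := by positivity
  have hppos : (0:ℝ) < p := by positivity
  -- swap equivalence
  let eswap : {e : E // Q ep em cell j i e} ≃ {e : E // Q ep em cell i j e} :=
    Equiv.subtypeEquivRight fun e => Q_comm
  have hT' : Summable (fun t : {e : E // Q ep em cell j i e} => a t.1) :=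
    (Equiv.summable_iff eswap (f := fun t : {e : E // Q ep em cell i j e} => a t.1)).mpr hT
  -- cell sizes
  set Di := ∑' v : {v : V // cell v = i}, d v.1 with hDidef
  set Dj := ∑' v : {v : V // cell v = j}, d v.1 with hDjdef
  set Ni := ∑' v : {v : V // cell v = i}, f v.1 * d v.1 with hNidef
  set Nj := ∑' v : {v : V // cell v = j}, f v.1 * d v.1 with hNjdef
  have hv0i : cell (pick ep em cell i t0.1) = i := cell_pick hij t0.2
  have hv0j : cell (pick ep em cell j t0.1) = j := cell_pick hij.symm (Q_comm.mp t0.2)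
  have hDi : 0 < Di := lt_of_lt_of_le (hd _)
    (Summable.le_tsum hdi ⟨pick ep em cell i t0.1, hv0i⟩ fun _ _ => (hd _).le)
  have hDj : 0 < Dj := lt_of_lt_of_le (hd _)
    (Summable.le_tsum hdj ⟨pick ep em cell j t0.1, hv0j⟩ fun _ _ => (hd _).le)
  -- the four `core` applications
  have hone_i : Summable (fun v : {v : V // cell v = i} => |(1:ℝ)| * d v.1) :=
    hdi.congr fun v => by rw [abs_one, one_mul]
  have hone_j : Summable (fun v : {v : V // cell v = j} => |(1:ℝ)| * d v.1) :=
    hdj.congr fun v => by rw [abs_one, one_mul]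
  have hWsum : HasSum (fun t : {e : E // Q ep em cell i j e} => a t.1) (c * Di) := by
    have h := core hij ha hd hT c hc0 hc (fun _ => (1:ℝ)) hone_i
    have h2 : (fun t : {e : E // Q ep em cell i j e} =>
        a t.1 * (1:ℝ)) = fun t => a t.1 := funext fun t => mul_one _
    rw [h2] at h
    rwa [show (∑' v : {v : V // cell v = i}, (1:ℝ) * d v.1) = Di from
      tsum_congr fun v => one_mul _] at h
  have hWsum' : HasSum (fun t : {e : E // Q ep em cell i j e} => a t.1) (c' * Dj) := by
    have h := core hij.symm ha hd hT' c' hc0' hc' (fun _ => (1:ℝ)) hone_j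
    have h2 : (fun t : {e : E // Q ep em cell j i e} =>
        a t.1 * (1:ℝ)) = fun t => a t.1 := funext fun t => mul_one _
    rw [h2] at h
    rw [show (∑' v : {v : V // cell v = j}, (1:ℝ) * d v.1) = Dj from
      tsum_congr fun v => one_mul _] at h
    exact (Equiv.hasSum_iff eswap
      (f := fun t : {e : E // Q ep em cell i j e} => a t.1)).mp h
  have hNisum : HasSum (fun t : {e : E // Q ep em cell i j e} =>
      a t.1 * f (pick ep em cell i t.1)) (c * Ni) :=
    core hij ha hd hT c hc0 hc f hfabs_i
  have hNjsum : HasSum (fun t : {e : E // Q ep em cell i j e} =>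
      a t.1 * f (pick ep em cell j t.1)) (c' * Nj) :=
    (Equiv.hasSum_iff eswap
      (f := fun t : {e : E // Q ep em cell i j e} => a t.1 * f (pick ep em cell j t.1))).mp
      (core hij.symm ha hd hT' c' hc0' hc' f hfabs_j)
  have hWW : c * Di = c' * Dj := hWsum.unique hWsum'
  set W := c * Di with hWdef
  have hW0 : 0 < W := by
    have h1 : a t0.1 ≤ ∑' t : {e : E // Q ep em cell i j e}, a t.1 :=
      Summable.le_tsum hWsum.summable t0 fun _ _ => (ha _).le
    rw [hWsum.tsum_eq] at h1
    exact lt_of_lt_of_le (ha _) h1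
  -- the mean identity
  have hNieq : Ni = mi * Di := by rw [hmi]; field_simp
  have hNjeq : Nj = mj * Dj := by rw [hmj]; field_simp
  have hU : HasSum (fun t : {e : E // Q ep em cell i j e} =>
      a t.1 * (f (pick ep em cell i t.1) - f (pick ep em cell j t.1)))
      (W * (mi - mj)) := by
    have h := hNisum.sub hNjsum
    have h2 : (fun t : {e : E // Q ep em cell i j e} =>
        a t.1 * f (pick ep em cell i t.1) - a t.1 * f (pick ep em cell j t.1))
        = fun t => a t.1 * (f (pick ep em cell i t.1) - f (pick ep em cell j t.1)) :=
      funext fun t => (mul_sub _ _ _).symm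
    rw [h2] at h
    have h3 : c * Ni - c' * Nj = W * (mi - mj) := by
      rw [hNieq, hNjeq, hWdef]
      rw [mul_sub]
      have : c' * (mj * Dj) = c' * Dj * mj := by ring
      rw [this, ← hWW]
      ring
    rwa [h3] at h
  -- summability of the absolute family
  have habsf_i : Summable (fun v : {v : V // cell v = i} => |(|f v.1|)| * d v.1) :=
    hfabs_i.congr fun v => by rw [abs_abs]
  have habsf_j : Summable (fun v : {v : V // cell v = j} => |(|f v.1|)| * d v.1) :=
    hfabs_j.congr fun v => by rw [abs_abs]
  have hFi : HasSum (fun t : {e : E // Q ep em cell i j e} =>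
      a t.1 * |f (pick ep em cell i t.1)|) (c * ∑' v : {v : V // cell v = i}, |f v.1| * d v.1) :=
    core hij ha hd hT c hc0 hc (fun v => |f v|) habsf_i
  have hFj : HasSum (fun t : {e : E // Q ep em cell i j e} =>
      a t.1 * |f (pick ep em cell j t.1)|) (c' * ∑' v : {v : V // cell v = j}, |f v.1| * d v.1) :=
    (Equiv.hasSum_iff eswap
      (f := fun t : {e : E // Q ep em cell i j e} => a t.1 * |f (pick ep em cell j t.1)|)).mp
      (core hij.symm ha hd hT' c' hc0' hc' (fun v => |f v|) habsf_j)
  have habsu : Summable (fun t : {e : E // Q ep em cell i j e} =>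
      a t.1 * |f (pick ep em cell i t.1) - f (pick ep em cell j t.1)|) := by
    refine Summable.of_nonneg_of_le
      (fun t => mul_nonneg (ha _).le (abs_nonneg _)) (fun t => ?_)
      (hFi.summable.add hFj.summable)
    have h1 : |f (pick ep em cell i t.1) - f (pick ep em cell j t.1)|
        ≤ |f (pick ep em cell i t.1)| + |f (pick ep em cell j t.1)| := abs_sub _ _
    calc a t.1 * |f (pick ep em cell i t.1) - f (pick ep em cell j t.1)|
        ≤ a t.1 * (|f (pick ep em cell i t.1)| + |f (pick ep em cell j t.1)|) :=
          mul_le_mul_of_nonneg_left h1 (ha _).le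
      _ = a t.1 * |f (pick ep em cell i t.1)| + a t.1 * |f (pick ep em cell j t.1)| :=
          mul_add _ _ _
  -- first inequality : A * W ≤ S1
  set S1 := ∑' t : {e : E // Q ep em cell i j e},
    a t.1 * |f (pick ep em cell i t.1) - f (pick ep em cell j t.1)| with hS1def
  set A := |mi - mj| with hAdef
  have hS1 : A * W ≤ S1 := by
    have hnorm : Summable (fun t : {e : E // Q ep em cell i j e} =>
        ‖a t.1 * (f (pick ep em cell i t.1) - f (pick ep em cell j t.1))‖) :=
      habsu.congr fun t => by
        rw [Real.norm_eq_abs, abs_mul, abs_of_pos (ha _)]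
    have h := norm_tsum_le_tsum_norm hnorm
    rw [hU.tsum_eq, Real.norm_eq_abs, abs_mul, abs_of_pos hW0] at h
    have h2 : ∑' t : {e : E // Q ep em cell i j e},
        ‖a t.1 * (f (pick ep em cell i t.1) - f (pick ep em cell j t.1))‖ = S1 :=
      tsum_congr fun t => by rw [Real.norm_eq_abs, abs_mul, abs_of_pos (ha _)]
    rw [h2] at h
    calc A * W = W * |mi - mj| := by rw [hAdef]; ring
      _ ≤ S1 := h
  -- identify the RHS energy with the `u` form
  have hQforms : ∀ t : {e : E // Q ep em cell i j e},
      |f (ep t.1) - f (em t.1)|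
        = |f (pick ep em cell i t.1) - f (pick ep em cell j t.1)| := by
    intro t
    rcases pick_pair hij t.2 with ⟨h1, h2⟩ | ⟨h1, h2⟩
    · rw [h1, h2]
    · rw [h1, h2, abs_sub_comm]
  set Su := ∑' t : {e : E // Q ep em cell i j e},
    a t.1 * |f (pick ep em cell i t.1) - f (pick ep em cell j t.1)| ^ p with hSudef
  have hSueq : (∑' t : {e : E // Q ep em cell i j e},
      a t.1 * |f (ep t.1) - f (em t.1)| ^ p) = Su :=
    tsum_congr fun t => by rw [hQforms t]
  have hSusum : Summable (fun t : {e : E // Q ep em cell i j e} =>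
      a t.1 * |f (pick ep em cell i t.1) - f (pick ep em cell j t.1)| ^ p) :=
    hfT.congr fun t => by rw [hQforms t]
  have hSu0 : 0 ≤ Su := tsum_nonneg fun t =>
    mul_nonneg (ha _).le (Real.rpow_nonneg (abs_nonneg _) _)
  -- Hölder
  have hpq : p.HolderConjugate (Real.conjExponent p) := Real.HolderConjugate.conjExponent hp
  set q := Real.conjExponent p with hqdef
  have holder : S1 ≤ Su ^ (1/p) * W ^ (1/q) := by
    letI : MeasurableSpace {e : E // Q ep em cell i j e} := ⊤
    haveI : MeasurableSingletonClass {e : E // Q ep em cell i j e} := ⟨fun _ => trivial⟩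
    have h := ENNReal.lintegral_mul_le_Lp_mul_Lq (MeasureTheory.Measure.count) hpq
      (f := fun t : {e : E // Q ep em cell i j e} =>
        (ENNReal.ofReal (a t.1)) ^ (1/p)
          * ENNReal.ofReal (|f (pick ep em cell i t.1) - f (pick ep em cell j t.1)|))
      (g := fun t : {e : E // Q ep em cell i j e} => (ENNReal.ofReal (a t.1)) ^ (1/q))
      measurable_from_top.aemeasurable measurable_from_top.aemeasurable
    rw [MeasureTheory.lintegral_count, MeasureTheory.lintegral_count,
      MeasureTheory.lintegral_count] at h
    simp only [Pi.mul_apply] at h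
    have hfg : ∀ t : {e : E // Q ep em cell i j e},
        (ENNReal.ofReal (a t.1)) ^ (1/p)
          * ENNReal.ofReal (|f (pick ep em cell i t.1) - f (pick ep em cell j t.1)|)
          * (ENNReal.ofReal (a t.1)) ^ (1/q)
        = ENNReal.ofReal
            (a t.1 * |f (pick ep em cell i t.1) - f (pick ep em cell j t.1)|) := by
      intro t
      rw [mul_right_comm, ← ENNReal.rpow_add _ _ (by simp [ENNReal.ofReal_eq_zero,
          not_le, ha t.1]) ENNReal.ofReal_ne_top]
      rw [show 1/p + 1/q = 1 by
        rw [one_div, one_div]; exact hpq.inv_add_inv_eq_one]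
      rw [ENNReal.rpow_one, ENNReal.ofReal_mul (ha _).le]
    rw [tsum_congr hfg] at h
    have hf1 : ∀ t : {e : E // Q ep em cell i j e},
        ((ENNReal.ofReal (a t.1)) ^ (1/p)
            * ENNReal.ofReal (|f (pick ep em cell i t.1) - f (pick ep em cell j t.1)|)) ^ p
        = ENNReal.ofReal
            (a t.1 * |f (pick ep em cell i t.1) - f (pick ep em cell j t.1)| ^ p) := by
      intro t
      rw [ENNReal.mul_rpow_of_nonneg _ _ hppos.le, ← ENNReal.rpow_mul,
        one_div_mul_cancel hp0, ENNReal.rpow_one,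
        ENNReal.ofReal_mul (ha _).le,
        ENNReal.ofReal_rpow_of_nonneg (abs_nonneg _) hppos.le]
    have hg1 : ∀ t : {e : E // Q ep em cell i j e},
        ((ENNReal.ofReal (a t.1)) ^ (1/q)) ^ q = ENNReal.ofReal (a t.1) := by
      intro t
      rw [← ENNReal.rpow_mul, one_div_mul_cancel hpq.symm.ne_zero, ENNReal.rpow_one]
    rw [tsum_congr hf1, tsum_congr hg1] at h
    rw [← ENNReal.ofReal_tsum_of_nonneg
        (fun t => mul_nonneg (ha _).le (abs_nonneg _)) habsu] at h
    rw [← ENNReal.ofReal_tsum_of_nonneg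
        (fun t => mul_nonneg (ha _).le (Real.rpow_nonneg (abs_nonneg _) _)) hSusum] at h
    rw [← ENNReal.ofReal_tsum_of_nonneg (fun t => (ha _).le) hWsum.summable] at h
    rw [hWsum.tsum_eq] at h
    rw [ENNReal.ofReal_rpow_of_nonneg hSu0 (one_div_nonneg.mpr hppos.le),
      ENNReal.ofReal_rpow_of_nonneg hW0.le (one_div_nonneg.mpr hpq.symm.pos.le),
      ← ENNReal.ofReal_mul (Real.rpow_nonneg hSu0 _)] at h
    exact (ENNReal.ofReal_le_ofReal_iff
      (mul_nonneg (Real.rpow_nonneg hSu0 _) (Real.rpow_nonneg hW0.le _))).mp h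
  -- conclude the real inequality A^p * W ≤ Su
  have hfinal : A ^ p * W ≤ Su := by
    have hA0 : 0 ≤ A := abs_nonneg _
    have hchain : A * W ≤ Su ^ (1/p) * W ^ (1/q) := le_trans hS1 holder
    have hAle : A ≤ Su ^ (1/p) * W ^ (1/q) / W := (le_div_iff₀ hW0).mpr hchain
    have hR0 : 0 ≤ Su ^ (1/p) * W ^ (1/q) :=
      mul_nonneg (Real.rpow_nonneg hSu0 _) (Real.rpow_nonneg hW0.le _)
    have h1 : A ^ p ≤ (Su ^ (1/p) * W ^ (1/q) / W) ^ p :=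
      Real.rpow_le_rpow hA0 hAle hppos.le
    have h2 : (Su ^ (1/p) * W ^ (1/q) / W) ^ p = Su * W ^ ((1/q) * p) / W ^ p := by
      rw [Real.div_rpow hR0 hW0.le, Real.mul_rpow (Real.rpow_nonneg hSu0 _)
        (Real.rpow_nonneg hW0.le _), ← Real.rpow_mul hSu0, one_div_mul_cancel hp0,
        Real.rpow_one, ← Real.rpow_mul hW0.le]
    have hexp : (1/q) * p = p - 1 := by
      rw [one_div, ← hpq.one_sub_inv]
      field_simp
    have h3 : Su * W ^ ((1/q) * p) / W ^ p * W = Su := by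
      rw [hexp, div_mul_eq_mul_div, div_eq_iff (by positivity : W ^ p ≠ 0)]
      rw [mul_assoc, ← Real.rpow_add_one hW0.ne' (p-1), show p - 1 + 1 = p by ring]
    calc A ^ p * W ≤ (Su ^ (1/p) * W ^ (1/q) / W) ^ p * W :=
          mul_le_mul_of_nonneg_right h1 hW0.le
      _ = Su * W ^ ((1/q) * p) / W ^ p * W := by rw [h2]
      _ = Su := h3
  -- wrap up in `ℝ≥0∞`
  have hLHS : (∑' t : {e : E // Q ep em cell i j e},
      ENNReal.ofReal (a t.1 * |mi - mj| ^ p)) = ENNReal.ofReal (A ^ p) * ENNReal.ofReal W := by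
    have h1 : ∀ t : {e : E // Q ep em cell i j e},
        ENNReal.ofReal (a t.1 * |mi - mj| ^ p)
          = ENNReal.ofReal (a t.1) * ENNReal.ofReal (A ^ p) := fun t => by
      rw [← ENNReal.ofReal_mul (ha _).le]
    rw [tsum_congr h1, ENNReal.tsum_mul_right,
      ← ENNReal.ofReal_tsum_of_nonneg (fun t => (ha _).le) hWsum.summable,
      hWsum.tsum_eq, mul_comm]
  have hRHS : (∑' t : {e : E // Q ep em cell i j e},
      ENNReal.ofReal (a t.1 * |f (ep t.1) - f (em t.1)| ^ p)) = ENNReal.ofReal Su := by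
    rw [← ENNReal.ofReal_tsum_of_nonneg
      (fun t => mul_nonneg (ha _).le (Real.rpow_nonneg (abs_nonneg _) _)) hfT, hSueq]
  rw [hLHS, hRHS, ← ENNReal.ofReal_mul (Real.rpow_nonneg (abs_nonneg _) _)]
  exact ENNReal.ofReal_le_ofReal hfinal

/-- Splitting a sum over edges between two distinct cells into the two orientations. -/
lemma tsum_T_split (φ : E → ℝ≥0∞) {i j : I} (hij : i ≠ j) :
    ∑' t : {e : E // Q ep em cell i j e}, φ t.1
      = (∑' e : {e : E // cell (ep e) = i ∧ cell (em e) = j}, φ e.1)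
        + ∑' e : {e : E // cell (ep e) = j ∧ cell (em e) = i}, φ e.1 := by
  have hdisj : Disjoint {e : E | cell (ep e) = i ∧ cell (em e) = j}
      {e : E | cell (ep e) = j ∧ cell (em e) = i} := by
    rw [Set.disjoint_left]
    rintro e ⟨he1, he2⟩ ⟨he1', he2'⟩
    exact hij (he1 ▸ he1')
  have h0 : ∑' t : {e : E // Q ep em cell i j e}, φ t.1
      = ∑' e : E, Set.indicator {e : E | Q ep em cell i j e} φ e := tsum_subtype _ φ
  have hun : {e : E | Q ep em cell i j e}
      = {e : E | cell (ep e) = i ∧ cell (em e) = j}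
        ∪ {e : E | cell (ep e) = j ∧ cell (em e) = i} := rfl
  rw [h0, hun, Set.indicator_union_of_disjoint hdisj]
  simp only [Pi.add_apply]
  rw [ENNReal.tsum_add,
    ← tsum_subtype {e : E | cell (ep e) = i ∧ cell (em e) = j} φ,
    ← tsum_subtype {e : E | cell (ep e) = j ∧ cell (em e) = i} φ]
  rfl

/-- Decomposing a sum over all edges according to the pair of cells of the endpoints. -/
lemma tsum_fiber_eq (φ : E → ℝ≥0∞) :
    ∑' e : E, φ e = ∑' ij : I × I,
      ∑' e : {e : E // cell (ep e) = ij.1 ∧ cell (em e) = ij.2}, φ e.1 := by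
  classical
  rw [← Equiv.tsum_eq (Equiv.sigmaFiberEquiv (fun e : E => (cell (ep e), cell (em e)))) φ]
  rw [ENNReal.tsum_sigma']
  refine tsum_congr fun ij => ?_
  exact Equiv.tsum_eq
    (Equiv.subtypeEquivRight (fun e =>
      show (cell (ep e), cell (em e)) = ij ↔ cell (ep e) = ij.1 ∧ cell (em e) = ij.2
        from Prod.ext_iff))
    (fun e' : {e : E // cell (ep e) = ij.1 ∧ cell (em e) = ij.2} => φ e'.1)

end Stmt7Aux

open Stmt7Aux in
/-- For an almost equitable partition with cells of finite weighted size and cross-cell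
edge sets of finite weight, the cellwise averaging operator `P` does not increase the
`p`-energy: `𝓔_p(Pf) ≤ 𝓔_p(f)`. -/
theorem stmt7 (V E I : Type*) [Countable V] [Countable E]
    (ep em : E → V) (hne : ∀ e, ep e ≠ em e)
    (a : E → ℝ) (ha : ∀ e, 0 < a e) (d : V → ℝ) (hd : ∀ v, 0 < d v)
    (cell : V → I)
    (halmost : ∀ i j : I, i ≠ j → ∃ c : ℝ, 0 ≤ c ∧ ∀ v : V, cell v = i →
      (∑' e : {e : E // (ep e = v ∧ cell (em e) = j) ∨ (em e = v ∧ cell (ep e) = j)}, a e.1)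
        = c * d v)
    (hcellfin : ∀ i : I, Summable (fun v : {v : V // cell v = i} => d v.1))
    (hedgefin : ∀ i j : I,
      Summable (fun e : {e : E // cell (ep e) = i ∧ cell (em e) = j} => a e.1))
    (p : ℝ) (hp : 1 < p)
    (f : V → ℝ) (hf2 : Summable (fun v => d v * (f v) ^ 2))
    (hfE : Summable (fun e => a e * |f (ep e) - f (em e)| ^ p)) :
    let P : V → ℝ := fun v =>
      (∑' w : {w : V // cell w = cell v}, f w.1 * d w.1) /
        (∑' w : {w : V // cell w = cell v}, d w.1)
    ENNReal.ofReal (1 / p) * ∑' e : E, ENNReal.ofReal (a e * |P (ep e) - P (em e)| ^ p)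
      ≤ ENNReal.ofReal (1 / p) *
          ∑' e : E, ENNReal.ofReal (a e * |f (ep e) - f (em e)| ^ p) := by
  intro P
  classical
  have hp0 : p ≠ 0 := by positivity
  set m : I → ℝ := fun k =>
    (∑' w : {w : V // cell w = k}, f w.1 * d w.1) /
      (∑' w : {w : V // cell w = k}, d w.1) with hm
  -- the energy summands
  set gE : E → ℝ≥0∞ := fun e =>
    ENNReal.ofReal (a e * |m (cell (ep e)) - m (cell (em e))| ^ p) with hgE
  set hE : E → ℝ≥0∞ := fun e =>
    ENNReal.ofReal (a e * |f (ep e) - f (em e)| ^ p) with hhE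
  show ENNReal.ofReal (1 / p) * ∑' e : E, gE e ≤ ENNReal.ofReal (1 / p) * ∑' e : E, hE e
  refine mul_le_mul_right ?_ _
  -- summability of |f| d on cells
  have hfabs : ∀ i : I, Summable (fun v : {v : V // cell v = i} => |f v.1| * d v.1) := by
    intro i
    have h2 : Summable (fun v : {v : V // cell v = i} => d v.1 * f v.1 ^ 2) :=
      (hf2.subtype {v : V | cell v = i})
    refine Summable.of_nonneg_of_le
      (fun v => mul_nonneg (abs_nonneg _) (hd _).le) (fun v => ?_)
      ((h2.add (hcellfin i)).div_const 2)
    have h3 := mul_nonneg (hd v.1).le (sq_nonneg (|f v.1| - 1))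
    have h4 := sq_abs (f v.1)
    nlinarith [hd v.1]
  -- the pairwise comparison
  have hpair : ∀ ij : I × I,
      ((∑' e : {e : E // cell (ep e) = ij.1 ∧ cell (em e) = ij.2}, gE e.1)
          + ∑' e : {e : E // cell (ep e) = ij.2 ∧ cell (em e) = ij.1}, gE e.1)
        ≤ (∑' e : {e : E // cell (ep e) = ij.1 ∧ cell (em e) = ij.2}, hE e.1)
          + ∑' e : {e : E // cell (ep e) = ij.2 ∧ cell (em e) = ij.1}, hE e.1 := by
    rintro ⟨i, j⟩
    by_cases hij : i = j
    · subst hij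
      have hz : ∀ e : {e : E // cell (ep e) = i ∧ cell (em e) = i}, gE e.1 = 0 := by
        rintro ⟨e, h1, h2⟩
        show ENNReal.ofReal (a e * |m (cell (ep e)) - m (cell (em e))| ^ p) = 0
        rw [h1, h2, sub_self, abs_zero, Real.zero_rpow hp0, mul_zero, ENNReal.ofReal_zero]
      have hzz : (∑' e : {e : E // cell (ep e) = i ∧ cell (em e) = i}, gE e.1) = 0 := by
        rw [tsum_congr hz, tsum_zero]
      show (∑' e : {e : E // cell (ep e) = i ∧ cell (em e) = i}, gE e.1)
          + (∑' e : {e : E // cell (ep e) = i ∧ cell (em e) = i}, gE e.1) ≤ _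
      rw [hzz, add_zero]
      exact zero_le
    · -- distinct cells
      obtain ⟨c, hc0, hc⟩ := halmost i j hij
      obtain ⟨c', hc0', hc'⟩ := halmost j i (Ne.symm hij)
      have hT : Summable (fun t : {e : E // Q ep em cell i j e} => a t.1) :=
        summable_T hij (hedgefin i j) (hedgefin j i)
      have hfT : Summable (fun t : {e : E // Q ep em cell i j e} =>
          a t.1 * |f (ep t.1) - f (em t.1)| ^ p) :=
        hfE.subtype {e : E | Q ep em cell i j e}
      have hkey := pair_le hij ha hd hT hc0 hc0' hc hc' hp
        (hfabs i) (hfabs j) (hcellfin i) (hcellfin j) hfT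
        (rfl : m i = _) (rfl : m j = _)
      have hgQ : ∀ t : {e : E // Q ep em cell i j e},
          gE t.1 = ENNReal.ofReal (a t.1 * |m i - m j| ^ p) := by
        rintro ⟨e, he⟩
        rcases he with ⟨h1, h2⟩ | ⟨h1, h2⟩
        · show ENNReal.ofReal (a e * |m (cell (ep e)) - m (cell (em e))| ^ p)
            = ENNReal.ofReal (a e * |m i - m j| ^ p)
          rw [h1, h2]
        · show ENNReal.ofReal (a e * |m (cell (ep e)) - m (cell (em e))| ^ p)
            = ENNReal.ofReal (a e * |m i - m j| ^ p)
          rw [h1, h2, abs_sub_comm]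
      rw [← tsum_T_split gE hij, ← tsum_T_split hE hij, tsum_congr hgQ]
      exact hkey
  -- assemble
  rw [tsum_fiber_eq (ep := ep) (em := em) (cell := cell) gE,
    tsum_fiber_eq (ep := ep) (em := em) (cell := cell) hE]
  set G : I × I → ℝ≥0∞ := fun ij =>
    ∑' e : {e : E // cell (ep e) = ij.1 ∧ cell (em e) = ij.2}, gE e.1 with hG
  set H : I × I → ℝ≥0∞ := fun ij =>
    ∑' e : {e : E // cell (ep e) = ij.1 ∧ cell (em e) = ij.2}, hE e.1 with hH
  have hswapG : ∑' ij : I × I, G ij.swap = ∑' ij : I × I, G ij :=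
    Equiv.tsum_eq (Equiv.prodComm I I) G
  have hswapH : ∑' ij : I × I, H ij.swap = ∑' ij : I × I, H ij :=
    Equiv.tsum_eq (Equiv.prodComm I I) H
  have hdouble : (∑' ij : I × I, G ij) + (∑' ij : I × I, G ij)
      ≤ (∑' ij : I × I, H ij) + (∑' ij : I × I, H ij) := by
    have h1 : ∑' ij : I × I, (G ij + G ij.swap) ≤ ∑' ij : I × I, (H ij + H ij.swap) :=
      ENNReal.tsum_le_tsum fun ij => hpair ij
    rw [ENNReal.tsum_add, ENNReal.tsum_add, hswapG, hswapH] at h1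
    exact h1
  rw [← two_mul, ← two_mul] at hdouble
  exact (ENNReal.mul_le_mul_iff_right two_ne_zero ENNReal.ofNat_ne_top).mp hdouble
end

section
/- With the notation of the almost equitable partition and cellwise averaging operator $P$ as above, for $p = 2$ one also has $\|D(f - Pf)\|_{\ell^2_a}^2 \le \|Df\|_{\ell^2_a}^2$ for every $f$ in the form domain, where $Dh(e) = h(e_+) - h(e_-)$; i.e., the null space of $P$ is invariant under the energy comparison. -/
open scoped ENNReal

section Aux

variable {V E I : Type*}

open Classical in
/-- The set of edges between cell `i` and cell `j` (in either orientation) decomposes as a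
sigma type over the vertices of cell `i`, fibered by the edges incident to each such vertex
with other endpoint in cell `j`. -/
private noncomputable def eSigma (ep em : E → V) (cell : V → I) (i j : I) (hij : i ≠ j) :
    {e : E // (cell (ep e) = i ∧ cell (em e) = j) ∨ (cell (ep e) = j ∧ cell (em e) = i)} ≃
    Σ v : {v : V // cell v = i},
      {e : E // (ep e = v.1 ∧ cell (em e) = j) ∨ (em e = v.1 ∧ cell (ep e) = j)} where
  toFun e :=
    if h1 : cell (ep e.1) = i then
      ⟨⟨ep e.1, h1⟩, ⟨e.1, Or.inl ⟨rfl, by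
        rcases e.2 with ⟨h, h'⟩ | ⟨h, h'⟩
        · exact h'
        · exact absurd (h1.symm.trans h) hij⟩⟩⟩
    else
      ⟨⟨em e.1, by
        rcases e.2 with ⟨h, h'⟩ | ⟨h, h'⟩
        · exact absurd h h1
        · exact h'⟩, ⟨e.1, Or.inr ⟨rfl, by
        rcases e.2 with ⟨h, h'⟩ | ⟨h, h'⟩
        · exact absurd h h1
        · exact h⟩⟩⟩
  invFun x := ⟨x.2.1, by
    obtain ⟨⟨v, hv⟩, ⟨e, he⟩⟩ := x
    rcases he with ⟨h1, h2⟩ | ⟨h1, h2⟩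
    · exact Or.inl ⟨by rw [h1]; exact hv, h2⟩
    · exact Or.inr ⟨h2, by rw [h1]; exact hv⟩⟩
  left_inv := by
    rintro ⟨e, he⟩
    apply Subtype.ext
    dsimp only
    by_cases h1 : cell (ep e) = i
    · rw [dif_pos h1]
    · rw [dif_neg h1]
  right_inv := by
    rintro ⟨⟨v, hv⟩, ⟨e, he⟩⟩
    dsimp only
    by_cases h1 : cell (ep e) = i
    · rw [dif_pos h1]
      apply Sigma.subtype_ext
      · apply Subtype.ext
        show ep e = v
        rcases he with ⟨ha1, _⟩ | ⟨_, ha2⟩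
        · exact ha1
        · exact absurd (h1.symm.trans ha2) hij
      · rfl
    · rw [dif_neg h1]
      apply Sigma.subtype_ext
      · apply Subtype.ext
        show em e = v
        rcases he with ⟨ha1, _⟩ | ⟨ha1, _⟩
        · exact absurd (show cell (ep e) = i by rw [ha1]; exact hv) h1
        · exact ha1
      · rfl

/-- Summability on a subset from summability on two covering subsets, for nonnegative weights. -/
private lemma summable_subset {f : E → ℝ} (hf : ∀ e, 0 ≤ f e) (s u w : Set E)
    (hsub : s ⊆ u ∪ w) (hu : Summable (fun e : u => f e)) (hw : Summable (fun e : w => f e)) :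
    Summable (fun e : s => f e) := by
  have hu' : Summable (u.indicator f) := summable_subtype_iff_indicator.mp hu
  have hw' : Summable (w.indicator f) := summable_subtype_iff_indicator.mp hw
  refine summable_subtype_iff_indicator.mpr ?_
  refine Summable.of_nonneg_of_le (fun e => Set.indicator_nonneg (fun x _ => hf x) e)
    (fun e => ?_) (hu'.add hw')
  by_cases h : e ∈ s
  · rw [Set.indicator_of_mem h]
    rcases hsub h with h' | h'
    · calc f e = u.indicator f e := (Set.indicator_of_mem h' f).symm
        _ ≤ _ := le_add_of_nonneg_right (Set.indicator_nonneg (fun x _ => hf x) e)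
    · calc f e = w.indicator f e := (Set.indicator_of_mem h' f).symm
        _ ≤ _ := le_add_of_nonneg_left (Set.indicator_nonneg (fun x _ => hf x) e)
  · rw [Set.indicator_of_notMem h]
    exact add_nonneg (Set.indicator_nonneg (fun x _ => hf x) e)
      (Set.indicator_nonneg (fun x _ => hf x) e)

/-- The weights are summable on each vertex fiber. -/
private lemma fibSummable (ep em : E → V) (a : E → ℝ) (ha : ∀ e, 0 ≤ a e) (cell : V → I)
    (i j : I)
    (h1 : Summable (fun e : {e : E // cell (ep e) = i ∧ cell (em e) = j} => a e.1))
    (h2 : Summable (fun e : {e : E // cell (ep e) = j ∧ cell (em e) = i} => a e.1))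
    (v : V) (hv : cell v = i) :
    Summable (fun e : {e : E // (ep e = v ∧ cell (em e) = j) ∨ (em e = v ∧ cell (ep e) = j)}
      => a e.1) := by
  refine summable_subset ha {e | (ep e = v ∧ cell (em e) = j) ∨ (em e = v ∧ cell (ep e) = j)}
    {e | cell (ep e) = i ∧ cell (em e) = j} {e | cell (ep e) = j ∧ cell (em e) = i} ?_ h1 h2
  rintro e (⟨he1, he2⟩ | ⟨he1, he2⟩)
  · exact Or.inl ⟨by rw [he1]; exact hv, he2⟩
  · exact Or.inr ⟨he2, by rw [he1]; exact hv⟩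

open Classical in
/-- The key cross-cell sum computation: summing `a e * φ(endpoint in cell i)` over all edges
between cells `i` and `j` equals `c * ∑ (φ * d)` over cell `i`, by the almost equitable
partition property. -/
private lemma crossSum (ep em : E → V) (a : E → ℝ) (ha : ∀ e, 0 ≤ a e) (d : V → ℝ)
    (cell : V → I) (i j : I) (hij : i ≠ j) (c : ℝ)
    (hc : ∀ v : V, cell v = i →
      (∑' e : {e : E // (ep e = v ∧ cell (em e) = j) ∨ (em e = v ∧ cell (ep e) = j)}, a e.1)
        = c * d v)
    (hfib : ∀ v : V, cell v = i →
      Summable (fun e : {e : E // (ep e = v ∧ cell (em e) = j) ∨ (em e = v ∧ cell (ep e) = j)}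
        => a e.1))
    (φ : V → ℝ)
    (hφ : Summable (fun v : {v : V // cell v = i} => |φ v.1| * d v.1)) :
    Summable (fun e : {e : E // (cell (ep e) = i ∧ cell (em e) = j) ∨
        (cell (ep e) = j ∧ cell (em e) = i)} =>
      a e.1 * φ (if cell (ep e.1) = i then ep e.1 else em e.1)) ∧
    (∑' e : {e : E // (cell (ep e) = i ∧ cell (em e) = j) ∨
        (cell (ep e) = j ∧ cell (em e) = i)},
        a e.1 * φ (if cell (ep e.1) = i then ep e.1 else em e.1))
      = c * ∑' v : {v : V // cell v = i}, φ v.1 * d v.1 := by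
  set s : (Σ v : {v : V // cell v = i},
      {e : E // (ep e = v.1 ∧ cell (em e) = j) ∨ (em e = v.1 ∧ cell (ep e) = j)}) → ℝ :=
    fun x => a x.2.1 * φ x.1.1 with hs_def
  have hcomp : ∀ e : {e : E // (cell (ep e) = i ∧ cell (em e) = j) ∨
      (cell (ep e) = j ∧ cell (em e) = i)},
      a e.1 * φ (if cell (ep e.1) = i then ep e.1 else em e.1)
        = s (eSigma ep em cell i j hij e) := by
    intro e
    by_cases h1 : cell (ep e.1) = i
    · rw [if_pos h1]
      simp only [eSigma, hs_def, Equiv.coe_fn_mk]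
      rw [dif_pos h1]
    · rw [if_neg h1]
      simp only [eSigma, hs_def, Equiv.coe_fn_mk]
      rw [dif_neg h1]
  have habs : ∀ (v : {v : V // cell v = i})
      (e : {e : E // (ep e = v.1 ∧ cell (em e) = j) ∨ (em e = v.1 ∧ cell (ep e) = j)}),
      |s ⟨v, e⟩| = a e.1 * |φ v.1| := fun v e => by
    rw [hs_def]
    simp [abs_mul, abs_of_nonneg (ha _)]
  have hsum : Summable s := by
    rw [← summable_abs_iff]
    apply (summable_sigma_of_nonneg fun x => abs_nonneg _).2
    refine ⟨fun v => ?_, ?_⟩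
    · exact ((hfib v.1 v.2).mul_right |φ v.1|).congr fun e => (habs v e).symm
    · apply (hφ.mul_left c).congr
      intro v
      rw [tsum_congr (fun e => habs v e), tsum_mul_right, hc v.1 v.2]
      ring
  constructor
  · exact (hsum.comp_injective (eSigma ep em cell i j hij).injective).congr
      fun e => (hcomp e).symm
  · rw [tsum_congr hcomp, Equiv.tsum_eq (eSigma ep em cell i j hij) s, Summable.tsum_sigma hsum]
    have hv : ∀ v : {v : V // cell v = i}, (∑' e, s ⟨v, e⟩) = c * (φ v.1 * d v.1) := by
      intro v
      rw [tsum_congr (fun e => (show s ⟨v, e⟩ = a e.1 * φ v.1 by rw [hs_def])),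
        tsum_mul_right, hc v.1 v.2]
      ring
    rw [tsum_congr hv, tsum_mul_left]

end Aux

set_option maxHeartbeats 1000000 in
/-- For `p = 2` and an almost equitable partition, also the null space of the cellwise
averaging operator `P` satisfies the energy comparison:
`‖D(f - Pf)‖²_{ℓ²_a} ≤ ‖Df‖²_{ℓ²_a}`. -/
theorem stmt8 (V E I : Type*) [Countable V] [Countable E]
    (ep em : E → V) (hne : ∀ e, ep e ≠ em e)
    (a : E → ℝ) (ha : ∀ e, 0 < a e) (d : V → ℝ) (hd : ∀ v, 0 < d v)
    (cell : V → I)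
    (halmost : ∀ i j : I, i ≠ j → ∃ c : ℝ, 0 ≤ c ∧ ∀ v : V, cell v = i →
      (∑' e : {e : E // (ep e = v ∧ cell (em e) = j) ∨ (em e = v ∧ cell (ep e) = j)}, a e.1)
        = c * d v)
    (hcellfin : ∀ i : I, Summable (fun v : {v : V // cell v = i} => d v.1))
    (hedgefin : ∀ i j : I,
      Summable (fun e : {e : E // cell (ep e) = i ∧ cell (em e) = j} => a e.1))
    (f : V → ℝ) (hf2 : Summable (fun v => d v * (f v) ^ 2))
    (hfE : Summable (fun e => a e * (f (ep e) - f (em e)) ^ 2)) :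
    let P : V → ℝ := fun v =>
      (∑' w : {w : V // cell w = cell v}, f w.1 * d w.1) /
        (∑' w : {w : V // cell w = cell v}, d w.1)
    ∑' e : E, ENNReal.ofReal
        (a e * ((f (ep e) - P (ep e)) - (f (em e) - P (em e))) ^ 2)
      ≤ ∑' e : E, ENNReal.ofReal (a e * (f (ep e) - f (em e)) ^ 2) := by
  classical
  intro P
  have hP : ∀ v, P v = (∑' w : {w : V // cell w = cell v}, f w.1 * d w.1) /
      (∑' w : {w : V // cell w = cell v}, d w.1) := fun v => rfl
  have ha' : ∀ e, 0 ≤ a e := fun e => (ha e).le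
  -- decompose the edge set according to the (unordered) pair of cells of the endpoints
  have decomp : ∀ h : E → ℝ≥0∞,
      ∑' e : E, h e = ∑' z : Sym2 I,
        ∑' e : {e : E // Sym2.mk (cell (ep e)) (cell (em e)) = z}, h e.1 := by
    intro h
    rw [← (Equiv.sigmaFiberEquiv fun e : E => Sym2.mk (cell (ep e)) (cell (em e))).tsum_eq h,
      ENNReal.tsum_sigma']
    rfl
  rw [decomp, decomp]
  apply ENNReal.tsum_le_tsum
  intro z
  induction z using Sym2.ind with
  | _ i j =>
  have hiff : ∀ e : E, (Sym2.mk (cell (ep e)) (cell (em e)) = Sym2.mk i j) ↔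
      ((cell (ep e) = i ∧ cell (em e) = j) ∨ (cell (ep e) = j ∧ cell (em e) = i)) := by
    intro e
    exact Sym2.eq_iff
  have transfer : ∀ G : E → ℝ≥0∞,
      (∑' x : {e : E // Sym2.mk (cell (ep e)) (cell (em e)) = Sym2.mk i j}, G x.1)
        = ∑' y : {e : E // (cell (ep e) = i ∧ cell (em e) = j) ∨
            (cell (ep e) = j ∧ cell (em e) = i)}, G y.1 :=
    fun G => (Equiv.subtypeEquivRight hiff).tsum_eq (fun y => G y.1)
  rw [transfer (fun e => ENNReal.ofReal
      (a e * ((f (ep e) - P (ep e)) - (f (em e) - P (em e))) ^ 2)),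
    transfer (fun e => ENNReal.ofReal (a e * (f (ep e) - f (em e)) ^ 2))]
  by_cases hij : i = j
  · -- both endpoints in the same cell: `P` is constant on the cell, so the terms agree
    subst hij
    apply le_of_eq
    apply tsum_congr
    rintro ⟨e, he⟩
    have hc : cell (ep e) = cell (em e) := by
      rcases he with ⟨h1, h2⟩ | ⟨h1, h2⟩ <;> rw [h1, h2]
    have hPe : P (ep e) = P (em e) := by
      rw [hP, hP, hc]
    rw [hPe]
    congr 1
    ring
  · -- the main case: endpoints in different cells
    rcases isEmpty_or_nonempty {e : E // (cell (ep e) = i ∧ cell (em e) = j) ∨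
        (cell (ep e) = j ∧ cell (em e) = i)} with hTe | hTne
    · simp [tsum_empty]
    obtain ⟨e₀⟩ := hTne
    obtain ⟨v₀, hv₀⟩ : ∃ v : V, cell v = i := by
      rcases e₀.2 with h | h
      exacts [⟨ep e₀.1, h.1⟩, ⟨em e₀.1, h.2⟩]
    obtain ⟨w₀, hw₀⟩ : ∃ w : V, cell w = j := by
      rcases e₀.2 with h | h
      exacts [⟨em e₀.1, h.2⟩, ⟨ep e₀.1, h.1⟩]
    have hDi : 0 < ∑' v : {v : V // cell v = i}, d v.1 :=
      lt_of_lt_of_le (hd v₀) (Summable.le_tsum (hcellfin i) ⟨v₀, hv₀⟩ fun _ _ => (hd _).le)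
    have hDj : 0 < ∑' v : {v : V // cell v = j}, d v.1 :=
      lt_of_lt_of_le (hd w₀) (Summable.le_tsum (hcellfin j) ⟨w₀, hw₀⟩ fun _ _ => (hd _).le)
    have hPi : ∀ v : V, cell v = i → P v =
        (∑' v : {v : V // cell v = i}, f v.1 * d v.1) /
          (∑' v : {v : V // cell v = i}, d v.1) := by
      intro v hv
      rw [hP, hv]
    have hPj : ∀ v : V, cell v = j → P v =
        (∑' v : {v : V // cell v = j}, f v.1 * d v.1) /
          (∑' v : {v : V // cell v = j}, d v.1) := by
      intro v hv
      rw [hP, hv]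
    -- summability of |f| * d on each cell
    have habsfd : ∀ k : I, Summable (fun v : {v : V // cell v = k} => |f v.1| * d v.1) := by
      intro k
      have h1 : Summable (fun v : {v : V // cell v = k} => (d v.1 + d v.1 * f v.1 ^ 2) / 2) :=
        ((hcellfin k).add (hf2.comp_injective Subtype.coe_injective)).div_const 2
      refine h1.of_nonneg_of_le (fun v => mul_nonneg (abs_nonneg _) (hd _).le) fun v => ?_
      have h0 : (0 : ℝ) ≤ d v.1 * f v.1 ^ 2 - 2 * (|f v.1| * d v.1) + d v.1 := by
        calc (0 : ℝ) ≤ d v.1 * (|f v.1| - 1) ^ 2 := mul_nonneg (hd _).le (sq_nonneg _)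
          _ = d v.1 * f v.1 ^ 2 - 2 * (|f v.1| * d v.1) + d v.1 := by
            rw [sub_sq, sq_abs]; ring
      linarith
    obtain ⟨cij, hcij0, hcij⟩ := halmost i j hij
    obtain ⟨cji, hcji0, hcji⟩ := halmost j i (Ne.symm hij)
    have hfibi : ∀ v : V, cell v = i → Summable (fun e :
        {e : E // (ep e = v ∧ cell (em e) = j) ∨ (em e = v ∧ cell (ep e) = j)} => a e.1) :=
      fun v hv => fibSummable ep em a ha' cell i j (hedgefin i j) (hedgefin j i) v hv
    have hfibj : ∀ v : V, cell v = j → Summable (fun e :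
        {e : E // (ep e = v ∧ cell (em e) = i) ∨ (em e = v ∧ cell (ep e) = i)} => a e.1) :=
      fun v hv => fibSummable ep em a ha' cell j i (hedgefin j i) (hedgefin i j) v hv
    have Af := crossSum ep em a ha' d cell i j hij cij hcij hfibi f (habsfd i)
    have A1 := crossSum ep em a ha' d cell i j hij cij hcij hfibi (fun _ => 1)
      (by simpa using hcellfin i)
    have Bf := crossSum ep em a ha' d cell j i (Ne.symm hij) cji hcji hfibj f (habsfd j)
    have B1 := crossSum ep em a ha' d cell j i (Ne.symm hij) cji hcji hfibj (fun _ => 1)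
      (by simpa using hcellfin j)
    -- transfer the `(j, i)` versions to the `(i, j)` index type
    set eqv2 : {e : E // (cell (ep e) = i ∧ cell (em e) = j) ∨
          (cell (ep e) = j ∧ cell (em e) = i)} ≃
        {e : E // (cell (ep e) = j ∧ cell (em e) = i) ∨
          (cell (ep e) = i ∧ cell (em e) = j)} :=
      Equiv.subtypeEquivRight fun e => or_comm with heqv2
    have hval2 : ∀ e : {e : E // (cell (ep e) = i ∧ cell (em e) = j) ∨
        (cell (ep e) = j ∧ cell (em e) = i)}, ((eqv2 e : E)) = e.1 := fun e => by
      rw [heqv2]; simp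
    have Sfj : Summable (fun e : {e : E // (cell (ep e) = i ∧ cell (em e) = j) ∨
        (cell (ep e) = j ∧ cell (em e) = i)} =>
        a e.1 * f (if cell (ep e.1) = j then ep e.1 else em e.1)) :=
      (Bf.1.comp_injective eqv2.injective).congr fun e => by
        simp only [Function.comp_apply, hval2]
    have hfj : (∑' e : {e : E // (cell (ep e) = i ∧ cell (em e) = j) ∨
        (cell (ep e) = j ∧ cell (em e) = i)},
          a e.1 * f (if cell (ep e.1) = j then ep e.1 else em e.1))
        = cji * ∑' v : {v : V // cell v = j}, f v.1 * d v.1 := by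
      rw [← Bf.2, ← Equiv.tsum_eq eqv2 (fun y : {e : E // (cell (ep e) = j ∧ cell (em e) = i) ∨
        (cell (ep e) = i ∧ cell (em e) = j)} =>
          a y.1 * f (if cell (ep y.1) = j then ep y.1 else em y.1))]
      exact tsum_congr fun x => by simp only [hval2]
    have S1j : Summable (fun e : {e : E // (cell (ep e) = i ∧ cell (em e) = j) ∨
        (cell (ep e) = j ∧ cell (em e) = i)} =>
        a e.1 * (fun _ : V => (1 : ℝ)) (if cell (ep e.1) = j then ep e.1 else em e.1)) :=
      (B1.1.comp_injective eqv2.injective).congr fun e => by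
        simp only [Function.comp_apply, hval2]
    have h1j : (∑' e : {e : E // (cell (ep e) = i ∧ cell (em e) = j) ∨
        (cell (ep e) = j ∧ cell (em e) = i)},
          a e.1 * (fun _ : V => (1 : ℝ)) (if cell (ep e.1) = j then ep e.1 else em e.1))
        = cji * ∑' v : {v : V // cell v = j}, (1 : ℝ) * d v.1 := by
      rw [← B1.2, ← Equiv.tsum_eq eqv2 (fun y : {e : E // (cell (ep e) = j ∧ cell (em e) = i) ∨
        (cell (ep e) = i ∧ cell (em e) = j)} =>
          a y.1 * (fun _ : V => (1 : ℝ)) (if cell (ep y.1) = j then ep y.1 else em y.1))]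
      exact tsum_congr fun x => by simp only [hval2]
    -- summability of the weights on the whole cross-cell edge set, and its value
    have Sa : Summable (fun e : {e : E // (cell (ep e) = i ∧ cell (em e) = j) ∨
        (cell (ep e) = j ∧ cell (em e) = i)} => a e.1) :=
      A1.1.congr fun e => mul_one _
    have hWi : (∑' e : {e : E // (cell (ep e) = i ∧ cell (em e) = j) ∨
        (cell (ep e) = j ∧ cell (em e) = i)}, a e.1)
        = cij * ∑' v : {v : V // cell v = i}, d v.1 := by
      rw [tsum_congr (fun e : {e : E // (cell (ep e) = i ∧ cell (em e) = j) ∨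
        (cell (ep e) = j ∧ cell (em e) = i)} => (mul_one (a e.1)).symm), A1.2]
      congr 1
      exact tsum_congr fun v => one_mul _
    have hWj : (∑' e : {e : E // (cell (ep e) = i ∧ cell (em e) = j) ∨
        (cell (ep e) = j ∧ cell (em e) = i)}, a e.1)
        = cji * ∑' v : {v : V // cell v = j}, d v.1 := by
      rw [tsum_congr (fun e : {e : E // (cell (ep e) = i ∧ cell (em e) = j) ∨
        (cell (ep e) = j ∧ cell (em e) = i)} => (mul_one (a e.1)).symm), h1j]
      congr 1
      exact tsum_congr fun v => one_mul _
    -- the endpoint selector in cell `j`, rewritten with the `i`-based `if`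
    have hifJ : ∀ e : {e : E // (cell (ep e) = i ∧ cell (em e) = j) ∨
        (cell (ep e) = j ∧ cell (em e) = i)},
        (if cell (ep e.1) = j then ep e.1 else em e.1)
          = (if cell (ep e.1) = i then em e.1 else ep e.1) := by
      rintro ⟨e, he⟩
      rcases he with ⟨h1, h2⟩ | ⟨h1, h2⟩
      · rw [if_neg (fun h => hij (h1.symm.trans h)), if_pos h1]
      · rw [if_pos h1, if_neg (fun h => hij (h.symm.trans h1))]
    have Sfj' : Summable (fun e : {e : E // (cell (ep e) = i ∧ cell (em e) = j) ∨
        (cell (ep e) = j ∧ cell (em e) = i)} =>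
        a e.1 * f (if cell (ep e.1) = i then em e.1 else ep e.1)) :=
      Sfj.congr fun e => by rw [hifJ e]
    have hfj' : (∑' e : {e : E // (cell (ep e) = i ∧ cell (em e) = j) ∨
        (cell (ep e) = j ∧ cell (em e) = i)},
          a e.1 * f (if cell (ep e.1) = i then em e.1 else ep e.1))
        = cji * ∑' v : {v : V // cell v = j}, f v.1 * d v.1 := by
      rw [← hfj]
      exact tsum_congr fun e => by rw [hifJ e]
    -- squares of differences are insensitive to the orientation
    have hg'sq : ∀ e : {e : E // (cell (ep e) = i ∧ cell (em e) = j) ∨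
        (cell (ep e) = j ∧ cell (em e) = i)},
        (f (ep e.1) - f (em e.1)) ^ 2
          = (f (if cell (ep e.1) = i then ep e.1 else em e.1)
              - f (if cell (ep e.1) = i then em e.1 else ep e.1)) ^ 2 := by
      intro e
      by_cases h : cell (ep e.1) = i
      · rw [if_pos h, if_pos h]
      · rw [if_neg h, if_neg h]
        ring
    have Sg2 : Summable (fun e : {e : E // (cell (ep e) = i ∧ cell (em e) = j) ∨
        (cell (ep e) = j ∧ cell (em e) = i)} =>
        a e.1 * (f (ep e.1) - f (em e.1)) ^ 2) :=
      hfE.comp_injective Subtype.coe_injective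
    have Sg'2 : Summable (fun e : {e : E // (cell (ep e) = i ∧ cell (em e) = j) ∨
        (cell (ep e) = j ∧ cell (em e) = i)} =>
        a e.1 * (f (if cell (ep e.1) = i then ep e.1 else em e.1)
          - f (if cell (ep e.1) = i then em e.1 else ep e.1)) ^ 2) :=
      Sg2.congr fun e => by rw [hg'sq e]
    have Sag' : Summable (fun e : {e : E // (cell (ep e) = i ∧ cell (em e) = j) ∨
        (cell (ep e) = j ∧ cell (em e) = i)} =>
        a e.1 * (f (if cell (ep e.1) = i then ep e.1 else em e.1)
          - f (if cell (ep e.1) = i then em e.1 else ep e.1))) :=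
      (Af.1.sub Sfj').congr fun e => by ring
    have hag' : (∑' e : {e : E // (cell (ep e) = i ∧ cell (em e) = j) ∨
        (cell (ep e) = j ∧ cell (em e) = i)},
          a e.1 * (f (if cell (ep e.1) = i then ep e.1 else em e.1)
            - f (if cell (ep e.1) = i then em e.1 else ep e.1)))
        = cij * (∑' v : {v : V // cell v = i}, f v.1 * d v.1)
          - cji * (∑' v : {v : V // cell v = j}, f v.1 * d v.1) := by
      rw [tsum_congr (fun e : {e : E // (cell (ep e) = i ∧ cell (em e) = j) ∨
        (cell (ep e) = j ∧ cell (em e) = i)} => mul_sub (a e.1)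
          (f (if cell (ep e.1) = i then ep e.1 else em e.1))
          (f (if cell (ep e.1) = i then em e.1 else ep e.1))),
        Summable.tsum_sub Af.1 Sfj', Af.2, hfj']
    -- key identity: the weighted sum of D f over the cross-cell edges equals t * W
    have hkey : (∑' e : {e : E // (cell (ep e) = i ∧ cell (em e) = j) ∨
        (cell (ep e) = j ∧ cell (em e) = i)},
          a e.1 * (f (if cell (ep e.1) = i then ep e.1 else em e.1)
            - f (if cell (ep e.1) = i then em e.1 else ep e.1)))
        = ((∑' v : {v : V // cell v = i}, f v.1 * d v.1) /
            (∑' v : {v : V // cell v = i}, d v.1)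
          - (∑' v : {v : V // cell v = j}, f v.1 * d v.1) /
            (∑' v : {v : V // cell v = j}, d v.1)) *
          (∑' e : {e : E // (cell (ep e) = i ∧ cell (em e) = j) ∨
            (cell (ep e) = j ∧ cell (em e) = i)}, a e.1) := by
      rw [hag', sub_mul]
      have e1 : (∑' v : {v : V // cell v = i}, f v.1 * d v.1) /
          (∑' v : {v : V // cell v = i}, d v.1) *
          (∑' e : {e : E // (cell (ep e) = i ∧ cell (em e) = j) ∨
            (cell (ep e) = j ∧ cell (em e) = i)}, a e.1)
          = cij * (∑' v : {v : V // cell v = i}, f v.1 * d v.1) := by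
        rw [hWi]
        field_simp
      have e2 : (∑' v : {v : V // cell v = j}, f v.1 * d v.1) /
          (∑' v : {v : V // cell v = j}, d v.1) *
          (∑' e : {e : E // (cell (ep e) = i ∧ cell (em e) = j) ∨
            (cell (ep e) = j ∧ cell (em e) = i)}, a e.1)
          = cji * (∑' v : {v : V // cell v = j}, f v.1 * d v.1) := by
        rw [hWj]
        field_simp
      rw [e1, e2]
    set t : ℝ := (∑' v : {v : V // cell v = i}, f v.1 * d v.1) /
        (∑' v : {v : V // cell v = i}, d v.1)
      - (∑' v : {v : V // cell v = j}, f v.1 * d v.1) /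
        (∑' v : {v : V // cell v = j}, d v.1) with ht_def
    -- summability of the shifted squares
    have Sleft : Summable (fun e : {e : E // (cell (ep e) = i ∧ cell (em e) = j) ∨
        (cell (ep e) = j ∧ cell (em e) = i)} =>
        a e.1 * ((f (if cell (ep e.1) = i then ep e.1 else em e.1)
          - f (if cell (ep e.1) = i then em e.1 else ep e.1)) - t) ^ 2) :=
      ((Sg'2.sub (Sag'.mul_left (2 * t))).add (Sa.mul_left (t ^ 2))).congr fun e => by ring
    -- the real inequality, by expanding the square
    have hreal : (∑' e : {e : E // (cell (ep e) = i ∧ cell (em e) = j) ∨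
        (cell (ep e) = j ∧ cell (em e) = i)},
          a e.1 * ((f (if cell (ep e.1) = i then ep e.1 else em e.1)
            - f (if cell (ep e.1) = i then em e.1 else ep e.1)) - t) ^ 2)
        ≤ ∑' e : {e : E // (cell (ep e) = i ∧ cell (em e) = j) ∨
            (cell (ep e) = j ∧ cell (em e) = i)},
          a e.1 * (f (if cell (ep e.1) = i then ep e.1 else em e.1)
            - f (if cell (ep e.1) = i then em e.1 else ep e.1)) ^ 2 := by
      have hexp : (∑' e : {e : E // (cell (ep e) = i ∧ cell (em e) = j) ∨
          (cell (ep e) = j ∧ cell (em e) = i)},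
            a e.1 * ((f (if cell (ep e.1) = i then ep e.1 else em e.1)
              - f (if cell (ep e.1) = i then em e.1 else ep e.1)) - t) ^ 2)
          = (∑' e : {e : E // (cell (ep e) = i ∧ cell (em e) = j) ∨
              (cell (ep e) = j ∧ cell (em e) = i)},
              a e.1 * (f (if cell (ep e.1) = i then ep e.1 else em e.1)
                - f (if cell (ep e.1) = i then em e.1 else ep e.1)) ^ 2)
            - (2 * t) * (∑' e : {e : E // (cell (ep e) = i ∧ cell (em e) = j) ∨
              (cell (ep e) = j ∧ cell (em e) = i)},
              a e.1 * (f (if cell (ep e.1) = i then ep e.1 else em e.1)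
                - f (if cell (ep e.1) = i then em e.1 else ep e.1)))
            + t ^ 2 * (∑' e : {e : E // (cell (ep e) = i ∧ cell (em e) = j) ∨
              (cell (ep e) = j ∧ cell (em e) = i)}, a e.1) := by
        rw [tsum_congr (fun e : {e : E // (cell (ep e) = i ∧ cell (em e) = j) ∨
          (cell (ep e) = j ∧ cell (em e) = i)} =>
            show a e.1 * ((f (if cell (ep e.1) = i then ep e.1 else em e.1)
              - f (if cell (ep e.1) = i then em e.1 else ep e.1)) - t) ^ 2
            = (a e.1 * (f (if cell (ep e.1) = i then ep e.1 else em e.1)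
                - f (if cell (ep e.1) = i then em e.1 else ep e.1)) ^ 2
              - (2 * t) * (a e.1 * (f (if cell (ep e.1) = i then ep e.1 else em e.1)
                - f (if cell (ep e.1) = i then em e.1 else ep e.1))))
              + t ^ 2 * a e.1 from by ring)]
        rw [Summable.tsum_add (Sg'2.sub (Sag'.mul_left (2 * t))) (Sa.mul_left (t ^ 2)),
          Summable.tsum_sub Sg'2 (Sag'.mul_left (2 * t)), tsum_mul_left, tsum_mul_left]
      rw [hexp, hkey]
      have hW0 : (0 : ℝ) ≤ ∑' e : {e : E // (cell (ep e) = i ∧ cell (em e) = j) ∨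
          (cell (ep e) = j ∧ cell (em e) = i)}, a e.1 :=
        tsum_nonneg fun e => ha' e.1
      nlinarith [sq_nonneg t, mul_nonneg (sq_nonneg t) hW0]
    -- pointwise identification of the shifted difference
    have hLexpr : ∀ e : {e : E // (cell (ep e) = i ∧ cell (em e) = j) ∨
        (cell (ep e) = j ∧ cell (em e) = i)},
        ((f (ep e.1) - P (ep e.1)) - (f (em e.1) - P (em e.1))) ^ 2
          = ((f (if cell (ep e.1) = i then ep e.1 else em e.1)
              - f (if cell (ep e.1) = i then em e.1 else ep e.1)) - t) ^ 2 := by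
      rintro ⟨e, he⟩
      rcases he with ⟨h1, h2⟩ | ⟨h1, h2⟩
      · rw [hPi _ h1, hPj _ h2]
        simp only [if_pos h1]
        rw [ht_def]
        ring
      · rw [hPj _ h1, hPi _ h2]
        rw [if_neg (fun h => hij (h.symm.trans h1)), if_neg (fun h => hij (h.symm.trans h1))]
        rw [ht_def]
        ring
    calc (∑' e : {e : E // (cell (ep e) = i ∧ cell (em e) = j) ∨
        (cell (ep e) = j ∧ cell (em e) = i)},
          ENNReal.ofReal (a e.1 * ((f (ep e.1) - P (ep e.1)) - (f (em e.1) - P (em e.1))) ^ 2))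
        = ∑' e : {e : E // (cell (ep e) = i ∧ cell (em e) = j) ∨
            (cell (ep e) = j ∧ cell (em e) = i)},
          ENNReal.ofReal (a e.1 * ((f (if cell (ep e.1) = i then ep e.1 else em e.1)
            - f (if cell (ep e.1) = i then em e.1 else ep e.1)) - t) ^ 2) :=
        tsum_congr fun e => by rw [hLexpr e]
      _ = ENNReal.ofReal (∑' e : {e : E // (cell (ep e) = i ∧ cell (em e) = j) ∨
            (cell (ep e) = j ∧ cell (em e) = i)},
          a e.1 * ((f (if cell (ep e.1) = i then ep e.1 else em e.1)
            - f (if cell (ep e.1) = i then em e.1 else ep e.1)) - t) ^ 2) :=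
        (ENNReal.ofReal_tsum_of_nonneg (fun (e : {e : E // (cell (ep e) = i ∧ cell (em e) = j) ∨
          (cell (ep e) = j ∧ cell (em e) = i)}) => mul_nonneg (ha' e.1) (sq_nonneg _)) Sleft).symm
      _ ≤ ENNReal.ofReal (∑' e : {e : E // (cell (ep e) = i ∧ cell (em e) = j) ∨
            (cell (ep e) = j ∧ cell (em e) = i)},
          a e.1 * (f (if cell (ep e.1) = i then ep e.1 else em e.1)
            - f (if cell (ep e.1) = i then em e.1 else ep e.1)) ^ 2) :=
        ENNReal.ofReal_le_ofReal hreal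
      _ = ∑' e : {e : E // (cell (ep e) = i ∧ cell (em e) = j) ∨
            (cell (ep e) = j ∧ cell (em e) = i)},
          ENNReal.ofReal (a e.1 * (f (if cell (ep e.1) = i then ep e.1 else em e.1)
            - f (if cell (ep e.1) = i then em e.1 else ep e.1)) ^ 2) :=
        ENNReal.ofReal_tsum_of_nonneg (fun (e : {e : E // (cell (ep e) = i ∧ cell (em e) = j) ∨
          (cell (ep e) = j ∧ cell (em e) = i)}) => mul_nonneg (ha' e.1) (sq_nonneg _)) Sg'2
      _ = ∑' e : {e : E // (cell (ep e) = i ∧ cell (em e) = j) ∨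
            (cell (ep e) = j ∧ cell (em e) = i)},
          ENNReal.ofReal (a e.1 * (f (ep e.1) - f (em e.1)) ^ 2) :=
        tsum_congr fun e => by rw [hg'sq e]
end

section
/- Let $G$ be an $(r,s)$-semiregular bipartite finite graph with parts $V_1, V_2$ (every node in $V_1$ has degree $r$, every node in $V_2$ has degree $s$), oriented so that every edge goes from $V_1$ to $V_2$. Then $\mathcal{I}^T \mathcal{I} = (r+s)\,\mathrm{Id} - \Delta_{G_L}$, where $\Delta_{G_L}$ is the discrete Laplacian of the line graph $G_L$ of $G$. -/
/-- For an `(r,s)`-semiregular bipartite finite simple graph oriented from part `P`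
to its complement, `𝓘ᵀ 𝓘 = (r+s)·Id - Δ_{G_L}`, where `Δ_{G_L} = D_L - A_L` is the
discrete Laplacian of the line graph. -/
theorem stmt13 (V E : Type*) [Fintype V] [Fintype E] [DecidableEq V] [DecidableEq E]
    (ep em : E → V)
    (P : V → Prop) [DecidablePred P]
    (hbip : ∀ e, P (ep e) ∧ ¬ P (em e))
    (hsimple : ∀ e f : E, ep e = ep f → em e = em f → e = f)
    (r s : ℕ)
    (hr : ∀ v, P v → (Finset.univ.filter (fun e : E => ep e = v ∨ em e = v)).card = r)
    (hs : ∀ v, ¬ P v → (Finset.univ.filter (fun e : E => ep e = v ∨ em e = v)).card = s) :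
    let Inc : Matrix V E ℝ := fun v e => if ep e = v then 1 else if em e = v then -1 else 0
    let AL : Matrix E E ℝ := fun e f =>
      if e ≠ f ∧ (ep e = ep f ∨ ep e = em f ∨ em e = ep f ∨ em e = em f) then 1 else 0
    let DL : E → ℝ := fun e => ((Finset.univ.filter (fun f : E =>
      e ≠ f ∧ (ep e = ep f ∨ ep e = em f ∨ em e = ep f ∨ em e = em f))).card : ℝ)
    Inc.transpose * Inc
      = ((r + s : ℝ) • (1 : Matrix E E ℝ)) - (Matrix.diagonal DL - AL) := by
  intro Inc AL DL
  have hP : ∀ e, P (ep e) := fun e => (hbip e).1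
  have hQ : ∀ e, ¬ P (em e) := fun e => (hbip e).2
  have hpm : ∀ e f : E, ep e ≠ em f := fun e f h => hQ f (h ▸ hP e)
  -- degree counting lemma
  have card_lemma : ∀ e : E,
      (Finset.univ.filter (fun f : E =>
        e ≠ f ∧ (ep e = ep f ∨ ep e = em f ∨ em e = ep f ∨ em e = em f))).card + 2 = r + s := by
    intro e
    set A : Finset E := Finset.univ.filter (fun f : E => ep f = ep e) with hAdef
    set B : Finset E := Finset.univ.filter (fun f : E => em f = em e) with hBdef
    have hA : A.card = r := by
      rw [← hr (ep e) (hP e)]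
      congr 1
      apply Finset.filter_congr
      intro f _
      constructor
      · exact Or.inl
      · rintro (h | h)
        · exact h
        · exact absurd h.symm (hpm e f)
    have hB : B.card = s := by
      rw [← hs (em e) (hQ e)]
      congr 1
      apply Finset.filter_congr
      intro f _
      constructor
      · exact Or.inr
      · rintro (h | h)
        · exact absurd h (hpm f e)
        · exact h
    have heA : e ∈ A := by simp [hAdef]
    have heB : e ∈ B := by simp [hBdef]
    have hS : Finset.univ.filter (fun f : E =>
        e ≠ f ∧ (ep e = ep f ∨ ep e = em f ∨ em e = ep f ∨ em e = em f))
        = (A.erase e) ∪ (B.erase e) := by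
      ext f
      simp only [Finset.mem_filter, Finset.mem_univ, true_and, Finset.mem_union,
        Finset.mem_erase, hAdef, hBdef]
      constructor
      · rintro ⟨hef, (h | h | h | h)⟩
        · exact Or.inl ⟨Ne.symm hef, h.symm⟩
        · exact absurd h (hpm e f)
        · exact absurd h.symm (hpm f e)
        · exact Or.inr ⟨Ne.symm hef, h.symm⟩
      · rintro (⟨hef, h⟩ | ⟨hef, h⟩)
        · exact ⟨Ne.symm hef, Or.inl h.symm⟩
        · exact ⟨Ne.symm hef, Or.inr (Or.inr (Or.inr h.symm))⟩
    have hdisj : Disjoint (A.erase e) (B.erase e) := by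
      rw [Finset.disjoint_left]
      intro f hf hf'
      simp only [Finset.mem_erase, Finset.mem_filter, Finset.mem_univ, and_true, hAdef,
        hBdef, true_and] at hf hf'
      exact hf.1 (hsimple f e hf.2 hf'.2)
    rw [hS, Finset.card_union_of_disjoint hdisj, Finset.card_erase_of_mem heA,
      Finset.card_erase_of_mem heB, hA, hB]
    have hr1 : 1 ≤ r := hA ▸ Finset.card_pos.mpr ⟨e, heA⟩
    have hs1 : 1 ≤ s := hB ▸ Finset.card_pos.mpr ⟨e, heB⟩
    omega
  ext e f
  have hne : ep e ≠ em e := hpm e e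
  have hsum : (Inc.transpose * Inc) e f
      = Inc (ep e) e * Inc (ep e) f + Inc (em e) e * Inc (em e) f := by
    rw [Matrix.mul_apply]
    rw [← Finset.sum_subset (Finset.subset_univ ({ep e, em e} : Finset V))]
    · rw [Finset.sum_pair hne]
      rfl
    · intro v _ hv
      simp only [Finset.mem_insert, Finset.mem_singleton, not_or] at hv
      rw [Matrix.transpose_apply]; simp only [Inc]
      rw [if_neg (show ¬ ep e = v from fun h => hv.1 h.symm), if_neg (show ¬ em e = v from fun h => hv.2 h.symm)]
      ring
  have h1 : Inc (ep e) e = 1 := by simp [Inc]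
  have h2 : Inc (em e) e = -1 := by simp [Inc, hne, Ne.symm hne]
  have h3 : Inc (ep e) f = if ep f = ep e then 1 else 0 := by
    simp only [Inc]
    rw [if_neg (show ¬ em f = ep e from fun h => hpm e f h.symm)]
  have h4 : Inc (em e) f = if em f = em e then -1 else 0 := by
    simp only [Inc]
    rw [if_neg (show ¬ ep f = em e from hpm f e)]
  by_cases hef : e = f
  · subst hef
    have h2eq : (Inc.transpose * Inc) e e = 2 := by
      rw [hsum, h1, h2]; norm_num
    rw [h2eq]
    simp only [Matrix.sub_apply, Matrix.smul_apply, Matrix.one_apply_eq, smul_eq_mul,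
      mul_one, Matrix.diagonal_apply_eq, AL, DL]
    change (2:ℝ) = _ - (Matrix.diagonal _ e e - (if e ≠ e ∧ _ then (1:ℝ) else 0))
    rw [Matrix.diagonal_apply_eq, if_neg (by simp)]
    have hcl := card_lemma e
    have hcast : (((Finset.univ.filter (fun f : E =>
        e ≠ f ∧ (ep e = ep f ∨ ep e = em f ∨ em e = ep f ∨ em e = em f))).card : ℝ)) + 2
        = (r : ℝ) + s := by exact_mod_cast congrArg (Nat.cast : ℕ → ℝ) hcl
    linarith
  · have hALval : AL e f = (if ep f = ep e then (1:ℝ) else 0) + (if em f = em e then 1 else 0) := by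
      simp only [AL]
      by_cases ha : ep f = ep e
      · have hb : ¬ em f = em e := fun hb => hef (hsimple e f ha.symm hb.symm)
        have hcond : e ≠ f ∧ (ep e = ep f ∨ ep e = em f ∨ em e = ep f ∨ em e = em f) :=
          ⟨hef, Or.inl ha.symm⟩
        rw [if_pos hcond, if_pos ha, if_neg hb]; norm_num
      · by_cases hb : em f = em e
        · have hcond : e ≠ f ∧ (ep e = ep f ∨ ep e = em f ∨ em e = ep f ∨ em e = em f) :=
            ⟨hef, Or.inr (Or.inr (Or.inr hb.symm))⟩
          rw [if_pos hcond, if_neg ha, if_pos hb]; norm_num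
        · have hcond : ¬ (e ≠ f ∧ (ep e = ep f ∨ ep e = em f ∨ em e = ep f ∨ em e = em f)) := by
            intro hc
            rcases hc.2 with h | h | h | h
            · exact ha h.symm
            · exact hpm e f h
            · exact hpm f e h.symm
            · exact hb h.symm
          rw [if_neg hcond, if_neg ha, if_neg hb]; norm_num
    rw [hsum, h1, h2, h3, h4]
    simp only [Matrix.sub_apply, Matrix.smul_apply, Matrix.one_apply_ne hef, smul_eq_mul,
      mul_zero, Matrix.diagonal_apply_ne _ hef, hALval]
    by_cases ha : ep f = ep e <;> by_cases hb : em f = em e <;>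
      simp [ha, hb]
end
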